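/- The linear map φ : ℂ⁸ → M₂(ℂ) × M₂(ℂ) given by φ(x₁,…,x₄,y₁,…,y₄) = ( !![y₃,−y₄; x₂,−x₁], !![y₁,−y₂; −x₄,x₃] ) is a linear isomorphism onto M₂(ℂ) × M₂(ℂ), and it maps Y bijectively onto Z; that is, for every (x,y) ∈ ℂ⁸ one has (x,y) ∈ Y if and only if φ(x,y) ∈ Z. -/
import Mathlib


open Matrix

/-- The 4×2 matrix `A₁(x,y)` with rows `(x₁,x₂), (x₃,x₄), (y₂,y₁), (y₄,y₃)`. -/
def A1 (x₁ x₂ x₃ x₄ y₁ y₂ y₃ y₄ : ℂ) : Matrix (Fin 4) (Fin 2) ℂ :=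
  !![x₁, x₂; x₃, x₄; y₂, y₁; y₄, y₃]

/-- The 4×2 matrix `A₂(x,y)` with rows `(x₁,x₃), (x₂,x₄), (y₃,y₁), (y₄,y₂)`. -/
def A2 (x₁ x₂ x₃ x₄ y₁ y₂ y₃ y₄ : ℂ) : Matrix (Fin 4) (Fin 2) ℂ :=
  !![x₁, x₃; x₂, x₄; y₃, y₁; y₄, y₂]

/-- The matrix `J = !![0,-1; 1,0]`. -/
def MJ : Matrix (Fin 2) (Fin 2) ℂ := !![0, -1; 1, 0]

/-- The matrix `T = !![0,1; 1,0]`. -/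
def MT : Matrix (Fin 2) (Fin 2) ℂ := !![0, 1; 1, 0]

/-- The variety `Z` of pairs of 2×2 matrices. -/
def Z : Set (Matrix (Fin 2) (Fin 2) ℂ × Matrix (Fin 2) (Fin 2) ℂ) :=
  {p | p.1.det = 0 ∧ p.2.det = 0 ∧ p.1 * MJ * p.2ᵀ = 0 ∧ p.2ᵀ * MT * p.1 = 0}

/-- The map `φ : ℂ⁸ → M₂(ℂ) × M₂(ℂ)`. -/
def phi : (ℂ × ℂ × ℂ × ℂ) × (ℂ × ℂ × ℂ × ℂ) →
    Matrix (Fin 2) (Fin 2) ℂ × Matrix (Fin 2) (Fin 2) ℂ :=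
  fun p =>
    match p with
    | ((x₁, x₂, x₃, x₄), (y₁, y₂, y₃, y₄)) =>
      (!![y₃, -y₄; x₂, -x₁], !![y₁, -y₂; -x₄, x₃])

/-- A 4×2 complex matrix has rank at most one iff all its 2×2 minors vanish. -/
lemma myrank_le_one_iff (M : Matrix (Fin 4) (Fin 2) ℂ) :
    M.rank ≤ 1 ↔ ∀ i j : Fin 4, M i 0 * M j 1 = M i 1 * M j 0 := by
  have hrn := LinearMap.finrank_range_add_finrank_ker M.mulVecLin
  rw [Module.finrank_pi] at hrn
  simp only [Fintype.card_fin] at hrn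
  have hker : M.rank ≤ 1 ↔ LinearMap.ker M.mulVecLin ≠ ⊥ := by
    rw [Matrix.rank]
    constructor
    · intro h hk
      rw [hk, finrank_bot] at hrn
      omega
    · intro h
      have : 0 < Module.finrank ℂ (LinearMap.ker M.mulVecLin) := by
        rw [Module.finrank_pos_iff]
        exact Submodule.nontrivial_iff_ne_bot.mpr h
      omega
  rw [hker]
  constructor
  · intro h i j
    obtain ⟨v, hv, hv0⟩ := Submodule.exists_mem_ne_zero_of_ne_bot h
    rw [LinearMap.mem_ker] at hv
    have hi := congrFun hv i
    have hj := congrFun hv j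
    simp [Matrix.mulVecLin_apply, Matrix.mulVec, dotProduct, Fin.sum_univ_two] at hi hj
    rcases eq_or_ne (v 0) 0 with h0 | h0
    · have h1 : v 1 ≠ 0 := by
        intro h1
        apply hv0
        funext k
        fin_cases k <;> simp [h0, h1]
      have hMi1 : M i 1 = 0 := by
        have : M i 1 * v 1 = 0 := by linear_combination hi - M i 0 * h0
        rcases mul_eq_zero.mp this with h | h
        · exact h
        · exact absurd h h1
      have hMj1 : M j 1 = 0 := by
        have : M j 1 * v 1 = 0 := by linear_combination hj - M j 0 * h0
        rcases mul_eq_zero.mp this with h | h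
        · exact h
        · exact absurd h h1
      simp [hMi1, hMj1]
    · refine mul_left_cancel₀ h0 ?_
      linear_combination M j 1 * hi - M i 1 * hj
  · intro h
    rcases eq_or_ne M 0 with hM | hM
    · simp [hM, Submodule.ne_bot_iff]
    · have : ∃ i k, M i k ≠ 0 := by
        by_contra hc
        push_neg at hc
        exact hM (by ext i k; simpa using hc i k)
      obtain ⟨i, k, hik⟩ := this
      rw [Submodule.ne_bot_iff]
      refine ⟨![M i 1, -(M i 0)], ?_, ?_⟩
      · rw [LinearMap.mem_ker]
        funext j
        simp [Matrix.mulVecLin_apply, Matrix.mulVec, dotProduct, Fin.sum_univ_two]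
        linear_combination h j i
      · intro hc
        have h0 := congrFun hc 0
        have h1 := congrFun hc 1
        simp at h0 h1
        fin_cases k
        · exact hik (by simpa using h1)
        · exact hik h0

theorem stmt1 :
    IsLinearMap ℂ phi ∧ Function.Bijective phi ∧
      ∀ x₁ x₂ x₃ x₄ y₁ y₂ y₃ y₄ : ℂ,
        ((A1 x₁ x₂ x₃ x₄ y₁ y₂ y₃ y₄).rank ≤ 1 ∧ (A2 x₁ x₂ x₃ x₄ y₁ y₂ y₃ y₄).rank ≤ 1) ↔
          phi ((x₁, x₂, x₃, x₄), (y₁, y₂, y₃, y₄)) ∈ Z := by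
  refine ⟨?_, ?_, ?_⟩
  · constructor
    · rintro ⟨⟨a1,a2,a3,a4⟩,b1,b2,b3,b4⟩ ⟨⟨c1,c2,c3,c4⟩,d1,d2,d3,d4⟩
      refine Prod.ext ?_ ?_ <;> ext i j <;> fin_cases i <;> fin_cases j <;>
        simp [phi, Prod.mk_add_mk] <;> ring
    · rintro c ⟨⟨a1,a2,a3,a4⟩,b1,b2,b3,b4⟩
      refine Prod.ext ?_ ?_ <;> ext i j <;> fin_cases i <;> fin_cases j <;>
        simp [phi, Prod.smul_mk]
  · rw [Function.bijective_iff_has_inverse]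
    refine ⟨fun q => ((-q.1 1 1, q.1 1 0, q.2 1 1, -q.2 1 0),
      (q.2 0 0, -q.2 0 1, q.1 0 0, -q.1 0 1)), ?_, ?_⟩
    · rintro ⟨⟨a1,a2,a3,a4⟩,b1,b2,b3,b4⟩
      simp [phi]
    · rintro ⟨B₁, B₂⟩
      simp only [phi]
      refine Prod.ext ?_ ?_ <;> simp <;>
        [rw [Matrix.eta_fin_two B₁]; rw [Matrix.eta_fin_two B₂]] <;> simp
  · intro x₁ x₂ x₃ x₄ y₁ y₂ y₃ y₄
    rw [myrank_le_one_iff, myrank_le_one_iff]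
    have ht : (!![y₁, -y₂; -x₄, x₃])ᵀ = !![y₁, -x₄; -y₂, x₃] := by
      ext i j; fin_cases i <;> fin_cases j <;> rfl
    simp only [Z, phi, Set.mem_setOf_eq, ht, Matrix.det_fin_two_of, ← Matrix.ext_iff,
      Fin.forall_fin_two]
    simp only [Matrix.mul_apply, Fin.sum_univ_two, MJ, MT, Matrix.zero_apply,
      Matrix.cons_val', Matrix.cons_val_zero, Matrix.cons_val_one, Matrix.head_cons,
      Matrix.head_fin_const, Matrix.empty_val', Matrix.cons_val_fin_one, Matrix.of_apply]
    constructor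
    · rintro ⟨h1, h2⟩
      have e01 := h1 0 1; have e02 := h1 0 2; have e03 := h1 0 3
      have e12 := h1 1 2; have e13 := h1 1 3; have e23 := h1 2 3
      have f02 := h2 0 2; have f03 := h2 0 3; have f12 := h2 1 2
      simp only [A1, A2, Matrix.cons_val', Matrix.cons_val_zero, Matrix.cons_val_one,
        Matrix.head_cons, Matrix.empty_val', Matrix.cons_val_fin_one, Matrix.of_apply,
        Fin.isValue, Matrix.cons_val_two, Matrix.cons_val_three, Matrix.tail_cons,
        Matrix.head_fin_const] at e01 e02 e03 e12 e13 e23 f02 f03 f12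
      exact ⟨by linear_combination -e03, by linear_combination e12,
        ⟨⟨by linear_combination e23, by linear_combination -e13⟩,
          by linear_combination -e02, by linear_combination e01⟩,
        ⟨by linear_combination f12, by linear_combination -f02 - e13⟩,
        by linear_combination e02 - f02, by linear_combination f03⟩
    · rintro ⟨z1, z2, ⟨⟨z3, z4⟩, z5, z6⟩, ⟨z7, z8⟩, z9, z10⟩
      constructor <;> intro i j <;> fin_cases i <;> fin_cases j <;>
        simp [A1, A2] <;>
        first
          | ring1
          | linear_combination z1 | linear_combination -z1
          | linear_combination z2 | linear_combination -z2
          | linear_combination z3 | linear_combination -z3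
          | linear_combination z4 | linear_combination -z4
          | linear_combination z5 | linear_combination -z5
          | linear_combination z6 | linear_combination -z6
          | linear_combination z7 | linear_combination -z7
          | linear_combination z8 | linear_combination -z8
          | linear_combination z9 | linear_combination -z9
          | linear_combination z10 | linear_combination -z10
          | linear_combination z4 + z8 | linear_combination -z4 - z8
          | linear_combination z4 + z9 | linear_combination -z4 - z9
          | linear_combination z5 + z8 | linear_combination -z5 - z8
          | linear_combination z5 + z9 | linear_combination -z5 - z9
          | linear_combination z8 + z9 | linear_combination -z8 - z9
          | linear_combination z4 + z5 | linear_combination -z4 - z5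
          | linear_combination z8 - z9 | linear_combination z9 - z8
          | linear_combination z4 - z5 | linear_combination z5 - z4
          | linear_combination z4 - z8 | linear_combination z8 - z4
          | linear_combination z4 - z9 | linear_combination z9 - z4
          | linear_combination z5 - z8 | linear_combination z8 - z5
          | linear_combination z5 - z9 | linear_combination z9 - z5
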